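/- The triadic measure μ on [0,1] defined by μ([0,1]) = 1, μ(I) = δ μ(πI) for I the middle third of πI, and μ(I) = ((1−δ)/2) μ(πI) for I an outer third of πI (0 < δ < 1/3), is doubling: for any two adjacent triadic intervals J₁, J₂ of the same length, μ(J₁) ≤ C_δ μ(J₂) where C_δ depends only on δ. -/

import Mathlib

open MeasureTheory ENNReal

/-- The triadic interval `[j/3^k, (j+1)/3^k)` of generation `k`. -/
def triSet (k j : ℕ) : Set ℝ := Set.Ico ((j : ℝ) / 3 ^ k) (((j : ℝ) + 1) / 3 ^ k)

/-- `μ` is the triadic measure with parameter `δ`: `μ([0,1]) = 1`, the middle triadic child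
gets fraction `δ` of the mass of its parent, and each outer child gets `(1-δ)/2`. -/
def IsTriadicMeasure (μ : Measure ℝ) (δ : ℝ) : Prop :=
  μ (triSet 0 0) = 1 ∧
  ∀ k j : ℕ, j < 3 ^ k →
    μ (triSet (k + 1) (3 * j)) = ENNReal.ofReal ((1 - δ) / 2) * μ (triSet k j) ∧
    μ (triSet (k + 1) (3 * j + 1)) = ENNReal.ofReal δ * μ (triSet k j) ∧
    μ (triSet (k + 1) (3 * j + 2)) = ENNReal.ofReal ((1 - δ) / 2) * μ (triSet k j)

/-- The triadic measure with parameter `0 < δ < 1/3` is doubling: for any two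
adjacent triadic intervals of the same generation the masses are comparable, with constant
depending only on `δ`. -/
theorem stmt_18 (μ : Measure ℝ) (δ : ℝ) (hδ0 : 0 < δ) (hδ : δ < 1 / 3)
    (hμ : IsTriadicMeasure μ δ) :
    ∃ C > (0:ℝ), ∀ k j : ℕ, j + 1 < 3 ^ k →
      μ (triSet k j) ≤ ENNReal.ofReal C * μ (triSet k (j + 1)) ∧
      μ (triSet k (j + 1)) ≤ ENNReal.ofReal C * μ (triSet k j) := by

  obtain ⟨h1, hrec⟩ := hμ
  have hδ1 : δ < 1 := by linarith
  set C : ℝ := (1 - δ) / (2 * δ) with hCdef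
  have hC0 : 0 < C := by
    apply div_pos <;> linarith
  have hC1 : 1 ≤ C := by
    rw [le_div_iff₀ (by linarith)]; linarith
  have key : ENNReal.ofReal ((1 - δ) / 2) = ENNReal.ofReal C * ENNReal.ofReal δ := by
    rw [← ENNReal.ofReal_mul hC0.le]
    congr 1
    field_simp [hCdef]
    rw [hCdef]; field_simp
  have hle : ENNReal.ofReal δ ≤ ENNReal.ofReal ((1 - δ) / 2) :=
    ENNReal.ofReal_le_ofReal (by linarith)
  have hE1 : (1 : ℝ≥0∞) ≤ ENNReal.ofReal C := by
    rw [← ENNReal.ofReal_one]; exact ENNReal.ofReal_le_ofReal hC1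
  refine ⟨C, hC0, ?_⟩
  intro k
  induction k with
  | zero => intro j hj; simp at hj
  | succ k ih =>
    intro j hj
    have h3 : (3:ℕ) ^ (k + 1) = 3 * 3 ^ k := by ring
    obtain ⟨q, r, hr, rfl⟩ : ∃ q r, r < 3 ∧ j = 3 * q + r :=
      ⟨j / 3, j % 3, Nat.mod_lt _ (by norm_num), (Nat.div_add_mod j 3).symm⟩
    have hq : q < 3 ^ k := by omega
    obtain ⟨e0, e1, e2⟩ := hrec k q hq
    interval_cases r
    · -- r = 0
      simp only [Nat.add_zero]
      constructor
      · rw [e0, e1, key, mul_assoc]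
      · rw [e0, e1]
        calc ENNReal.ofReal δ * μ (triSet k q)
            ≤ ENNReal.ofReal ((1 - δ) / 2) * μ (triSet k q) := mul_le_mul_left hle _
          _ ≤ ENNReal.ofReal C * (ENNReal.ofReal ((1 - δ) / 2) * μ (triSet k q)) :=
              le_mul_of_one_le_left' hE1
    · -- r = 1
      constructor
      · rw [e1, e2]
        calc ENNReal.ofReal δ * μ (triSet k q)
            ≤ ENNReal.ofReal ((1 - δ) / 2) * μ (triSet k q) := mul_le_mul_left hle _
          _ ≤ ENNReal.ofReal C * (ENNReal.ofReal ((1 - δ) / 2) * μ (triSet k q)) :=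
              le_mul_of_one_le_left' hE1
      · rw [e1, e2, key, mul_assoc]
    · -- r = 2
      have hq1 : q + 1 < 3 ^ k := by omega
      obtain ⟨e0', _, _⟩ := hrec k (q + 1) hq1
      have hj2 : 3 * q + 2 + 1 = 3 * (q + 1) := by ring
      rw [hj2, e0', e2]
      obtain ⟨ih1, ih2⟩ := ih q hq1
      constructor
      · calc ENNReal.ofReal ((1 - δ) / 2) * μ (triSet k q)
            ≤ ENNReal.ofReal ((1 - δ) / 2) * (ENNReal.ofReal C * μ (triSet k (q + 1))) :=
              mul_le_mul_right ih1 _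
          _ = ENNReal.ofReal C * (ENNReal.ofReal ((1 - δ) / 2) * μ (triSet k (q + 1))) := by
              rw [mul_left_comm]
      · calc ENNReal.ofReal ((1 - δ) / 2) * μ (triSet k (q + 1))
            ≤ ENNReal.ofReal ((1 - δ) / 2) * (ENNReal.ofReal C * μ (triSet k q)) :=
              mul_le_mul_right ih2 _
          _ = ENNReal.ofReal C * (ENNReal.ofReal ((1 - δ) / 2) * μ (triSet k q)) := by
              rw [mul_left_comm]
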